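/- Let A ∈ M_d(ℂ) and α ∈ W(A). If there exist matrices A_n → A and nondegenerate segments s_n ⊂ W(A_n), each s_n an exposed face of W(A_n), with s_n → {α} in Hausdorff distance, then f_A^{-1}(α) contains two orthogonal unit vectors; in particular α is a multiply generated point of W(A). -/

import Mathlib

open Matrix Complex

/-- Numerical range map `f_A(x) = x* A x`. -/
noncomputable def nrMap {d : ℕ} (A : Matrix (Fin d) (Fin d) ℂ) (x : Fin d → ℂ) : ℂ :=
  star x ⬝ᵥ A *ᵥ x

/-- Real part `Re(A) = (A + A*)/2`. -/
noncomputable def reP {d : ℕ} (A : Matrix (Fin d) (Fin d) ℂ) : Matrix (Fin d) (Fin d) ℂ :=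
  ((2:ℂ)⁻¹) • (A + Aᴴ)

/-- Imaginary part `Im(A) = (A - A*)/(2i)`. -/
noncomputable def imP {d : ℕ} (A : Matrix (Fin d) (Fin d) ℂ) : Matrix (Fin d) (Fin d) ℂ :=
  (((2:ℂ) * Complex.I)⁻¹) • (A - Aᴴ)

/-- `A(θ) = cos θ · Re(A) + sin θ · Im(A)`. -/
noncomputable def Ath {d : ℕ} (A : Matrix (Fin d) (Fin d) ℂ) (θ : ℝ) :
    Matrix (Fin d) (Fin d) ℂ :=
  Real.cos θ • reP A + Real.sin θ • imP A

/-- Numerical range `W(A)`. -/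
noncomputable def numRange {d : ℕ} (A : Matrix (Fin d) (Fin d) ℂ) : Set ℂ :=
  {z : ℂ | ∃ x : Fin d → ℂ, star x ⬝ᵥ x = 1 ∧ z = nrMap A x}

local notation "⟪" x ", " y "⟫" => @inner ℂ _ _ x y
lemma conj_quad {d : ℕ} (A : Matrix (Fin d) (Fin d) ℂ) (x : Fin d → ℂ) :
    star x ⬝ᵥ Aᴴ *ᵥ x = starRingEnd ℂ (star x ⬝ᵥ A *ᵥ x) := by
  have : star (star x ⬝ᵥ A *ᵥ x) = star x ⬝ᵥ Aᴴ *ᵥ x := by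
    rw [star_dotProduct, star_mulVec, star_star, ← dotProduct_mulVec]
  rw [← this]; rfl

lemma quad_reP {d : ℕ} (A : Matrix (Fin d) (Fin d) ℂ) (x : Fin d → ℂ) :
    star x ⬝ᵥ (reP A) *ᵥ x = ((nrMap A x).re : ℂ) := by
  rw [reP, smul_mulVec, dotProduct_smul, add_mulVec, dotProduct_add, conj_quad]
  rw [Complex.add_conj]
  simp [nrMap]

lemma quad_imP {d : ℕ} (A : Matrix (Fin d) (Fin d) ℂ) (x : Fin d → ℂ) :
    star x ⬝ᵥ (imP A) *ᵥ x = ((nrMap A x).im : ℂ) := by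
  rw [imP, smul_mulVec, dotProduct_smul, sub_mulVec, dotProduct_sub, conj_quad]
  rw [Complex.sub_conj]
  rw [nrMap, smul_eq_mul]
  have hI : Complex.I ≠ 0 := Complex.I_ne_zero
  field_simp
  push_cast
  ring

lemma reP_herm {d : ℕ} (A : Matrix (Fin d) (Fin d) ℂ) : (reP A).IsHermitian := by
  unfold reP Matrix.IsHermitian
  rw [conjTranspose_smul]
  simp [Matrix.IsHermitian, add_comm]

lemma imP_herm {d : ℕ} (A : Matrix (Fin d) (Fin d) ℂ) : (imP A).IsHermitian := by
  unfold imP Matrix.IsHermitian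
  rw [conjTranspose_smul]
  simp only [conjTranspose_sub, conjTranspose_conjTranspose]
  have : star (2 * Complex.I)⁻¹ = -(2*Complex.I)⁻¹ := by
    rw [show star (2*Complex.I)⁻¹ = (starRingEnd ℂ) (2*Complex.I)⁻¹ from rfl]
    rw [map_inv₀, _root_.map_mul, Complex.conj_I]
    rw [Complex.conj_ofNat]
    rw [mul_neg, neg_inv]
  rw [this]
  module
lemma inner_ev {d : ℕ} (x y : Fin d → ℂ) :
    ⟪(WithLp.equiv 2 (Fin d → ℂ)).symm x, (WithLp.equiv 2 (Fin d → ℂ)).symm y⟫ =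
      star x ⬝ᵥ y := by
  simp [PiLp.inner_apply, dotProduct, mul_comm]

lemma norm_sq_ev {d : ℕ} (x : Fin d → ℂ) :
    (‖(WithLp.equiv 2 (Fin d → ℂ)).symm x‖ : ℝ)^2 = (star x ⬝ᵥ x).re := by
  rw [← inner_self_eq_norm_sq (𝕜 := ℂ), inner_ev]; rfl

lemma unit_ev {d : ℕ} (x : Fin d → ℂ) (hx : star x ⬝ᵥ x = 1) :
    ‖(WithLp.equiv 2 (Fin d → ℂ)).symm x‖ = 1 := by
  have h := norm_sq_ev x
  rw [hx] at h
  simp only [Complex.one_re] at h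
  nlinarith [norm_nonneg ((WithLp.equiv 2 (Fin d → ℂ)).symm x)]

lemma dot_self_real {d : ℕ} (x : Fin d → ℂ) :
    star x ⬝ᵥ x = ((star x ⬝ᵥ x).re : ℂ) := by
  rw [← inner_ev, inner_self_eq_norm_sq_to_K]
  simp [← Complex.ofReal_pow]

lemma unit_ev' {d : ℕ} (x : Fin d → ℂ) (hx : ‖(WithLp.equiv 2 (Fin d → ℂ)).symm x‖ = 1) :
    star x ⬝ᵥ x = 1 := by
  rw [dot_self_real, ← norm_sq_ev, hx]
  norm_num
lemma core {E : Type*} [NormedAddCommGroup E] [InnerProductSpace ℂ E] [CompleteSpace E]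
    (T : E →L[ℂ] E) (hT : IsSelfAdjoint T) (x₁ x₂ : E) (h1 : ‖x₁‖ = 1) (h2 : ‖x₂‖ = 1)
    (hm1 : IsMaxOn T.reApplyInnerSelf (Metric.sphere 0 1) x₁)
    (hm2 : IsMaxOn T.reApplyInnerSelf (Metric.sphere 0 1) x₂)
    (hne : ∀ c : ℂ, x₂ ≠ c • x₁) :
    ∃ q : E, ‖q‖ = 1 ∧ ⟪x₁, q⟫ = 0 ∧ T.reApplyInnerSelf q = T.reApplyInnerSelf x₁ := by
  have hx1 : x₁ ≠ 0 := by intro h; rw [h] at h1; simp at h1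
  have hx2 : x₂ ≠ 0 := by intro h; rw [h] at h2; simp at h2
  set μ : ℝ := ⨆ x : {x : E // x ≠ 0}, T.rayleighQuotient x with hμ
  have he1 : Module.End.HasEigenvector (T : E →ₗ[ℂ] E) (μ : ℂ) x₁ := by
    have := hT.hasEigenvector_of_isMaxOn hx1 (by rwa [h1])
    exact this
  have he2 : Module.End.HasEigenvector (T : E →ₗ[ℂ] E) (μ : ℂ) x₂ := by
    have := hT.hasEigenvector_of_isMaxOn hx2 (by rwa [h2])
    exact this
  have hT1 : T x₁ = (μ : ℂ) • x₁ := by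
    have := he1.apply_eq_smul; exact this
  have hT2 : T x₂ = (μ : ℂ) • x₂ := he2.apply_eq_smul
  set v : E := x₂ - ⟪x₁, x₂⟫ • x₁ with hv
  have hvne : v ≠ 0 := by
    intro h
    exact hne ⟪x₁, x₂⟫ (by rw [← sub_eq_zero]; exact h)
  have hTv : T v = (μ : ℂ) • v := by
    rw [hv, map_sub, T.map_smul, hT1, hT2, smul_sub, smul_comm]
  set q : E := (‖v‖ : ℂ)⁻¹ • v with hq
  have hnq : ‖q‖ = 1 := by
    rw [hq, norm_smul]
    simp [norm_ne_zero_iff.mpr hvne]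
  have horth : ⟪x₁, q⟫ = 0 := by
    rw [hq, inner_smul_right, hv, inner_sub_right, inner_smul_right, inner_self_eq_norm_sq_to_K, h1]
    simp
  have hTq : T q = (μ : ℂ) • q := by
    rw [hq, T.map_smul, hTv, smul_comm]
  have key : ∀ y : E, ‖y‖ = 1 → T y = (μ:ℂ) • y → T.reApplyInnerSelf y = μ := by
    intro y hy hTy
    rw [ContinuousLinearMap.reApplyInnerSelf, hTy, inner_smul_left]
    rw [inner_self_eq_norm_sq_to_K, hy]
    simp
  exact ⟨q, hnq, horth, by rw [key q hnq hTq, key x₁ h1 hT1]⟩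
-- l as combination
lemma l_decomp (l : ℂ →L[ℝ] ℝ) (z : ℂ) : l z = z.re * l 1 + z.im * l Complex.I := by
  have hz : z = z.re • (1:ℂ) + z.im • Complex.I := by
    simp [Complex.real_smul]
  calc l z = l (z.re • (1:ℂ) + z.im • Complex.I) := by rw [← hz]
  _ = z.re * l 1 + z.im * l Complex.I := by
      rw [map_add, l.map_smul, l.map_smul]; simp [smul_eq_mul]

lemma nrMap_smul {d : ℕ} (B : Matrix (Fin d) (Fin d) ℂ) (c : ℂ) (x : Fin d → ℂ) :
    nrMap B (c • x) = (starRingEnd ℂ c * c) * nrMap B x := by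
  simp [nrMap, mulVec_smul, dotProduct_smul, star_smul, smul_dotProduct, smul_eq_mul]
  ring

lemma dot_smul_self {d : ℕ} (c : ℂ) (x : Fin d → ℂ) :
    star (c • x) ⬝ᵥ (c • x) = (starRingEnd ℂ c * c) * (star x ⬝ᵥ x) := by
  simp [star_smul, smul_dotProduct, dotProduct_smul, smul_eq_mul]
  ring

lemma step {d : ℕ} (B : Matrix (Fin d) (Fin d) ℂ) (t : Set ℂ)
    (hface : IsExposed ℝ (numRange B) t)
    (hseg : ∃ p q : ℂ, p ≠ q ∧ t = segment ℝ p q) :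
    ∃ p q : Fin d → ℂ, star p ⬝ᵥ p = 1 ∧ star q ⬝ᵥ q = 1 ∧ star p ⬝ᵥ q = 0 ∧
      nrMap B p ∈ t ∧ nrMap B q ∈ t := by
  obtain ⟨zp, zq, hzpq, ht⟩ := hseg
  have hzp : zp ∈ t := ht ▸ left_mem_segment ℝ zp zq
  have hzq : zq ∈ t := ht ▸ right_mem_segment ℝ zp zq
  obtain ⟨l, hl⟩ := hface ⟨zp, hzp⟩
  rw [hl] at hzp hzq
  obtain ⟨⟨x₁, hx₁, hfx₁⟩, hmax₁⟩ := hzp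
  obtain ⟨⟨x₂, hx₂, hfx₂⟩, hmax₂⟩ := hzq
  -- the Hermitian matrix
  set a : ℝ := l 1 with ha
  set b : ℝ := l Complex.I with hb
  set H : Matrix (Fin d) (Fin d) ℂ := (a:ℂ) • reP B + (b:ℂ) • imP B with hH
  have hHerm : H.IsHermitian := by
    unfold Matrix.IsHermitian
    rw [hH, conjTranspose_add, conjTranspose_smul, conjTranspose_smul,
      reP_herm B, imP_herm B]
    simp [Complex.conj_ofReal]
  -- quadratic form identity
  have hquad : ∀ x : Fin d → ℂ, star x ⬝ᵥ H *ᵥ x = ((l (nrMap B x) : ℝ) : ℂ) := by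
    intro x
    rw [hH, add_mulVec, dotProduct_add, smul_mulVec, smul_mulVec,
      dotProduct_smul, dotProduct_smul, quad_reP, quad_imP, l_decomp l (nrMap B x)]
    push_cast
    simp [smul_eq_mul]
    ring
  -- the operator
  set T : EuclideanSpace ℂ (Fin d) →L[ℂ] EuclideanSpace ℂ (Fin d) :=
    LinearMap.toContinuousLinearMap (Matrix.toEuclideanLin H) with hT
  have hTapp : ∀ x : Fin d → ℂ,
      T ((WithLp.equiv 2 (Fin d → ℂ)).symm x) = (WithLp.equiv 2 (Fin d → ℂ)).symm (H *ᵥ x) := by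
    intro x; rfl
  have hTsa : IsSelfAdjoint T := by
    apply LinearMap.IsSymmetric.isSelfAdjoint
    rw [show (T : EuclideanSpace ℂ (Fin d) →ₗ[ℂ] EuclideanSpace ℂ (Fin d)) =
      Matrix.toEuclideanLin H from rfl]
    exact Matrix.isHermitian_iff_isSymmetric.mp hHerm
  -- reApplyInnerSelf formula
  have hre : ∀ x : Fin d → ℂ,
      T.reApplyInnerSelf ((WithLp.equiv 2 (Fin d → ℂ)).symm x) = l (nrMap B x) := by
    intro x
    rw [ContinuousLinearMap.reApplyInnerSelf, hTapp x]
    have : ⟪(WithLp.equiv 2 (Fin d → ℂ)).symm (H *ᵥ x), (WithLp.equiv 2 (Fin d → ℂ)).symm x⟫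
        = star (H *ᵥ x) ⬝ᵥ x := inner_ev _ _
    rw [show (RCLike.re (⟪(WithLp.equiv 2 (Fin d → ℂ)).symm (H *ᵥ x), (WithLp.equiv 2 (Fin d → ℂ)).symm x⟫ : ℂ)) = (star (H *ᵥ x) ⬝ᵥ x).re by rw [this]; rfl]
    have h2 : star (H *ᵥ x) ⬝ᵥ x = star (star x ⬝ᵥ H *ᵥ x) := by
      rw [star_dotProduct]
    rw [h2, hquad x]
    simp
  -- maximality
  have hmax : ∀ x : Fin d → ℂ, star x ⬝ᵥ x = 1 → (∀ y ∈ numRange B, l y ≤ l (nrMap B x)) →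
      IsMaxOn T.reApplyInnerSelf (Metric.sphere 0 1) ((WithLp.equiv 2 (Fin d → ℂ)).symm x) := by
    intro x hx hmx y hy
    simp only [Metric.mem_sphere, dist_zero_right] at hy
    have hyv : y = (WithLp.equiv 2 (Fin d → ℂ)).symm (WithLp.equiv 2 (Fin d → ℂ) y) := rfl
    rw [Set.mem_setOf_eq, hyv, hre, hre]
    exact hmx _ ⟨_, unit_ev' _ (by rw [← hyv]; exact hy), rfl⟩
  have hm1 := hmax x₁ hx₁ (by rw [← hfx₁]; exact hmax₁)
  have hm2 := hmax x₂ hx₂ (by rw [← hfx₂]; exact hmax₂)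
  -- non-proportionality
  have hne : ∀ c : ℂ, (WithLp.equiv 2 (Fin d → ℂ)).symm x₂ ≠
      c • (WithLp.equiv 2 (Fin d → ℂ)).symm x₁ := by
    intro c hc
    have hx2c : x₂ = c • x₁ := congrArg (WithLp.equiv 2 (Fin d → ℂ)) hc
    have hcc : starRingEnd ℂ c * c = 1 := by
      have := dot_smul_self c x₁
      rw [← hx2c, hx₁, hx₂, mul_one] at this
      exact this.symm
    apply hzpq
    rw [hfx₁, hfx₂, hx2c, nrMap_smul, hcc, one_mul]
  -- core
  obtain ⟨q, hq1, hqorth, hqre⟩ := core T hTsa _ _ (unit_ev x₁ hx₁) (unit_ev x₂ hx₂) hm1 hm2 hne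
  set qv : Fin d → ℂ := WithLp.equiv 2 (Fin d → ℂ) q with hqv
  have hqev : q = (WithLp.equiv 2 (Fin d → ℂ)).symm qv := rfl
  refine ⟨x₁, qv, hx₁, unit_ev' qv (by rw [← hqev]; exact hq1), ?_, ?_, ?_⟩
  · rw [show star x₁ ⬝ᵥ qv = ⟪(WithLp.equiv 2 (Fin d → ℂ)).symm x₁, q⟫ from (inner_ev x₁ qv).symm]
    exact hqorth
  · rw [← hfx₁]; exact ht ▸ left_mem_segment ℝ zp zq
  · -- nrMap B qv ∈ t
    rw [hl]
    have hlq : l (nrMap B qv) = l zp := by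
      rw [← hre qv, ← hqev, hqre, hre x₁, ← hfx₁]
    refine ⟨⟨qv, unit_ev' qv (by rw [← hqev]; exact hq1), rfl⟩, ?_⟩
    intro y hy
    rw [hlq]
    exact hmax₁ y hy
lemma nrMap_tendsto {d : ℕ} (A : Matrix (Fin d) (Fin d) ℂ) (Bn : ℕ → Matrix (Fin d) (Fin d) ℂ)
    (hB : Filter.Tendsto Bn Filter.atTop (nhds A))
    (xn : ℕ → (Fin d → ℂ)) (x : Fin d → ℂ) (hx : Filter.Tendsto xn Filter.atTop (nhds x)) :
    Filter.Tendsto (fun n => nrMap (Bn n) (xn n)) Filter.atTop (nhds (nrMap A x)) := by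
  have hBij : ∀ i j, Filter.Tendsto (fun n => Bn n i j) Filter.atTop (nhds (A i j)) := by
    intro i j
    have h1 := (tendsto_pi_nhds.mp hB) i
    exact (tendsto_pi_nhds.mp h1) j
  have hxi : ∀ i, Filter.Tendsto (fun n => xn n i) Filter.atTop (nhds (x i)) :=
    fun i => tendsto_pi_nhds.mp hx i
  unfold nrMap dotProduct Matrix.mulVec
  apply tendsto_finset_sum
  intro i _
  apply Filter.Tendsto.mul
  · exact (Complex.continuous_conj.tendsto _).comp (hxi i)
  · exact tendsto_finset_sum _ fun j _ => (hBij i j).mul (hxi j)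

lemma isBounded_segment (p q : ℂ) : Bornology.IsBounded (segment ℝ p q) := by
  rw [segment_eq_image]
  exact ((isCompact_Icc).image (by continuity)).isBounded

lemma mem_dist_le (t : Set ℂ) (zp zq α z : ℂ) (ht : t = segment ℝ zp zq) (hz : z ∈ t) :
    dist z α ≤ Metric.hausdorffDist t {α} := by
  have hb : Bornology.IsBounded t := ht ▸ isBounded_segment zp zq
  have hfin := Metric.hausdorffEdist_ne_top_of_nonempty_of_bounded ⟨z, hz⟩
    (Set.singleton_nonempty α) hb Bornology.isBounded_singleton
  calc dist z α = Metric.infDist z {α} := (Metric.infDist_singleton).symm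
  _ ≤ Metric.hausdorffDist t {α} := Metric.infDist_le_hausdorffDist_of_mem hz hfin

set_option maxHeartbeats 1000000 in
theorem stmt14 {d : ℕ} (A : Matrix (Fin d) (Fin d) ℂ) (α : ℂ) (hα : α ∈ numRange A)
    (Aseq : ℕ → Matrix (Fin d) (Fin d) ℂ) (s : ℕ → Set ℂ)
    (hconv : Filter.Tendsto Aseq Filter.atTop (nhds A))
    (hface : ∀ n, IsExposed ℝ (numRange (Aseq n)) (s n))
    (hseg : ∀ n, ∃ p q : ℂ, p ≠ q ∧ s n = segment ℝ p q)
    (hH : Filter.Tendsto (fun n => Metric.hausdorffDist (s n) {α}) Filter.atTop (nhds 0)) :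
    ∃ p q : Fin d → ℂ, star p ⬝ᵥ p = 1 ∧ star q ⬝ᵥ q = 1 ∧
      nrMap A p = α ∧ nrMap A q = α ∧ star p ⬝ᵥ q = 0 := by
  have hstep : ∀ n, ∃ p q : Fin d → ℂ, star p ⬝ᵥ p = 1 ∧ star q ⬝ᵥ q = 1 ∧ star p ⬝ᵥ q = 0 ∧
      nrMap (Aseq n) p ∈ s n ∧ nrMap (Aseq n) q ∈ s n :=
    fun n => step _ _ (hface n) (hseg n)
  choose pn qn hpn hqn horthn hps hqs using hstep
  set ev : (Fin d → ℂ) → EuclideanSpace ℂ (Fin d) := ⇑(WithLp.equiv 2 (Fin d → ℂ)).symm with hev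
  set K : Set (EuclideanSpace ℂ (Fin d) × EuclideanSpace ℂ (Fin d)) :=
    (Metric.sphere 0 1 ×ˢ Metric.sphere 0 1) ∩ {y | ⟪y.1, y.2⟫ = 0} with hK
  have hKcomp : IsCompact K := ((isCompact_sphere 0 1).prod (isCompact_sphere 0 1)).inter_right
    (isClosed_eq continuous_inner continuous_const)
  have hmem : ∀ n, (ev (pn n), ev (qn n)) ∈ K := by
    intro n
    exact ⟨⟨mem_sphere_zero_iff_norm.mpr (unit_ev _ (hpn n)),
      mem_sphere_zero_iff_norm.mpr (unit_ev _ (hqn n))⟩, (inner_ev (pn n) (qn n)).trans (horthn n)⟩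
  obtain ⟨⟨P, Q⟩, hPQ, φ, hφ, hconv2⟩ := hKcomp.tendsto_subseq hmem
  set p : Fin d → ℂ := WithLp.equiv 2 (Fin d → ℂ) P with hp
  set q : Fin d → ℂ := WithLp.equiv 2 (Fin d → ℂ) Q with hq
  have hevp : ev p = P := rfl
  have hevq : ev q = Q := rfl
  -- plain convergence
  have hPfst : Filter.Tendsto (fun n => ev (pn (φ n))) Filter.atTop (nhds P) :=
    (continuous_fst.tendsto (P, Q)).comp hconv2
  have hQsnd : Filter.Tendsto (fun n => ev (qn (φ n))) Filter.atTop (nhds Q) :=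
    (continuous_snd.tendsto (P, Q)).comp hconv2
  have hpe : Filter.Tendsto (fun n => pn (φ n)) Filter.atTop (nhds p) :=
    ((PiLp.continuous_ofLp 2 (fun _ : Fin d => ℂ)).tendsto P).comp hPfst
  have hqe : Filter.Tendsto (fun n => qn (φ n)) Filter.atTop (nhds q) :=
    ((PiLp.continuous_ofLp 2 (fun _ : Fin d => ℂ)).tendsto Q).comp hQsnd
  have hAφ : Filter.Tendsto (fun n => Aseq (φ n)) Filter.atTop (nhds A) :=
    hconv.comp hφ.tendsto_atTop
  have hHφ : Filter.Tendsto (fun n => Metric.hausdorffDist (s (φ n)) {α}) Filter.atTop (nhds 0) :=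
    hH.comp hφ.tendsto_atTop
  -- limit of nrMap values
  have hlim : ∀ (xn : ℕ → (Fin d → ℂ)) (x : Fin d → ℂ),
      Filter.Tendsto xn Filter.atTop (nhds x) →
      (∀ n, nrMap (Aseq (φ n)) (xn n) ∈ s (φ n)) → nrMap A x = α := by
    intro xn x hx hmem'
    have h1 : Filter.Tendsto (fun n => nrMap (Aseq (φ n)) (xn n)) Filter.atTop
        (nhds (nrMap A x)) := nrMap_tendsto A _ hAφ xn x hx
    have h2 : Filter.Tendsto (fun n => nrMap (Aseq (φ n)) (xn n)) Filter.atTop (nhds α) := by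
      rw [tendsto_iff_dist_tendsto_zero]
      apply squeeze_zero (fun n => dist_nonneg)
        (g := fun n => Metric.hausdorffDist (s (φ n)) {α}) _ hHφ
      intro n
      obtain ⟨zp, zq, _, ht⟩ := hseg (φ n)
      exact mem_dist_le _ zp zq α _ ht (hmem' n)
    exact tendsto_nhds_unique h1 h2
  refine ⟨p, q, ?_, ?_, ?_, ?_, ?_⟩
  · apply unit_ev' p
    have : (WithLp.equiv 2 (Fin d → ℂ)).symm p = P := rfl
    rw [this]
    exact mem_sphere_zero_iff_norm.mp hPQ.1.1
  · apply unit_ev' q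
    have : (WithLp.equiv 2 (Fin d → ℂ)).symm q = Q := rfl
    rw [this]
    exact mem_sphere_zero_iff_norm.mp hPQ.1.2
  · exact hlim _ p hpe (fun n => hps (φ n))
  · exact hlim _ q hqe (fun n => hqs (φ n))
  · rw [show star p ⬝ᵥ q = ⟪P, Q⟫ from (inner_ev p q).symm]
    exact hPQ.2
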